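/- Suppose ᾱ : Ω → ℝ is measurable and for almost every x ∈ Ω, limsup_{|t|→∞} g(x,t)/(|t|^(p-2)t) ≤ ᾱ(x), where g is a Carathéodory function satisfying |g(x,t)| ≤ a(x) + b|t|^(p-1). Then for almost every x ∈ Ω, limsup_{|t|→∞} G(x,t)/|t|^p ≤ ᾱ(x)/p, where G(x,t) = ∫₀ᵗ g(x,τ)dτ. -/
import Mathlib

open MeasureTheory Filter intervalIntegral

lemma keyTop (p : ℝ) (hp : 1 < p) (f : ℝ → ℝ) (hf : Continuous f) (α ε : ℝ) (hε : 0 < ε)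
    (h : ∀ᶠ t in atTop, f t / (|t| ^ (p - 2) * t) ≤ α) :
    ∀ᶠ t in atTop, (∫ τ in (0:ℝ)..t, f τ) / |t| ^ p ≤ α / p + ε := by
  have hp0 : 0 < p := lt_trans one_pos hp
  obtain ⟨T₀, hT₀⟩ := eventually_atTop.mp h
  set T := max T₀ 1 with hT
  have hT1 : (1:ℝ) ≤ T := le_max_right _ _
  have hTpos : 0 < T := lt_of_lt_of_le one_pos hT1
  have hpt : ∀ τ : ℝ, T ≤ τ → f τ ≤ α * τ ^ (p - 1) := by
    intro τ hτ
    have hτ0 : 0 < τ := lt_of_lt_of_le hTpos hτ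
    have hd : |τ| ^ (p - 2) * τ = τ ^ (p - 1) := by
      rw [abs_of_pos hτ0, show p - 1 = (p - 2) + 1 by ring, Real.rpow_add_one (ne_of_gt hτ0)]
    have h1 := hT₀ τ (le_trans (le_max_left _ _) hτ)
    rw [hd] at h1
    have hpow : 0 < τ ^ (p - 1) := Real.rpow_pos_of_pos hτ0 _
    calc f τ = f τ / τ ^ (p-1) * τ ^ (p-1) := by field_simp
      _ ≤ α * τ ^ (p-1) := mul_le_mul_of_nonneg_right h1 hpow.le
  set C : ℝ := (∫ τ in (0:ℝ)..T, f τ) - α * T ^ p / p with hC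
  have key : ∀ t : ℝ, T ≤ t → (∫ τ in (0:ℝ)..t, f τ) ≤ C + α / p * t ^ p := by
    intro t ht
    have hsplit : (∫ τ in (0:ℝ)..T, f τ) + (∫ τ in T..t, f τ) = ∫ τ in (0:ℝ)..t, f τ :=
      intervalIntegral.integral_add_adjacent_intervals (hf.intervalIntegrable _ _)
        (hf.intervalIntegrable _ _)
    have hmono : (∫ τ in T..t, f τ) ≤ ∫ τ in T..t, α * τ ^ (p-1) := by
      apply intervalIntegral.integral_mono_on ht (hf.intervalIntegrable _ _)
        ((intervalIntegrable_rpow (Or.inl (by linarith))).const_mul α)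
      intro τ hτ
      exact hpt τ hτ.1
    have hcomp : (∫ τ in T..t, α * τ ^ (p-1)) = α * ((t ^ p - T ^ p) / p) := by
      rw [intervalIntegral.integral_const_mul, integral_rpow (Or.inl (by linarith))]
      norm_num
    rw [← hsplit]
    have : α * ((t ^ p - T ^ p) / p) = α / p * t ^ p - α * T ^ p / p := by ring
    linarith [hmono.trans_eq (hcomp.trans this)]
  have htend : Tendsto (fun t : ℝ => t ^ p) atTop atTop := tendsto_rpow_atTop hp0
  filter_upwards [eventually_ge_atTop T, eventually_ge_atTop (1:ℝ),
    htend.eventually_ge_atTop (|C| / ε)] with t ht ht1 ht2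
  have ht0 : 0 < t := lt_of_lt_of_le one_pos ht1
  have htp : 0 < t ^ p := Real.rpow_pos_of_pos ht0 _
  rw [abs_of_pos ht0]
  have h1 : (∫ τ in (0:ℝ)..t, f τ) / t ^ p ≤ (C + α / p * t ^ p) / t ^ p :=
    div_le_div_of_nonneg_right (key t ht) htp.le
  have h2 : (C + α / p * t ^ p) / t ^ p = C / t ^ p + α / p := by
    rw [add_div, mul_div_assoc, div_self htp.ne', mul_one]
  have h3 : C / t ^ p ≤ ε := by
    calc C / t ^ p ≤ |C| / t ^ p := div_le_div_of_nonneg_right (le_abs_self C) htp.le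
      _ ≤ ε := by
        rw [div_le_iff₀ htp]
        calc |C| = |C| / ε * ε := by field_simp
          _ ≤ t ^ p * ε := mul_le_mul_of_nonneg_right ht2 hε.le
          _ = ε * t ^ p := by ring
  linarith [h1.trans_eq h2]

lemma keyMain (p : ℝ) (hp : 1 < p) (f : ℝ → ℝ) (hf : Continuous f) (A B : ℝ)
    (hgrow : ∀ t : ℝ, |f t| ≤ A + B * |t| ^ (p - 1)) (α : ℝ)
    (h : limsup (fun t : ℝ => f t / (|t| ^ (p - 2) * t)) (atBot ⊔ atTop) ≤ α) :
    limsup (fun t : ℝ => (∫ τ in (0:ℝ)..t, f τ) / |t| ^ p) (atBot ⊔ atTop) ≤ α / p := by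
  have hp0 : 0 < p := lt_trans one_pos hp
  have hp1 : 0 ≤ p - 1 := by linarith
  haveI : (atBot ⊔ atTop : Filter ℝ).NeBot := sup_neBot.mpr (Or.inl atBot_neBot)
  set C : ℝ := |A| + |B| with hCdef
  -- eventual |t| ≥ 1 in the sup filter
  have hev1 : ∀ᶠ t : ℝ in atBot ⊔ atTop, 1 ≤ |t| := by
    rw [eventually_sup]
    constructor
    · filter_upwards [eventually_le_atBot (-1:ℝ)] with t ht
      rw [abs_of_nonpos (by linarith)]; linarith
    · filter_upwards [eventually_ge_atTop (1:ℝ)] with t ht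
      rw [abs_of_nonneg (by linarith)]; linarith
  have hgrow' : ∀ t : ℝ, 1 ≤ |t| → |f t| ≤ C * |t| ^ (p - 1) := by
    intro t ht
    have hpow1 : 1 ≤ |t| ^ (p - 1) := Real.one_le_rpow ht hp1
    have hpow0 : 0 ≤ |t| ^ (p - 1) := by linarith
    calc |f t| ≤ A + B * |t| ^ (p - 1) := hgrow t
      _ ≤ |A| * |t| ^ (p - 1) + |B| * |t| ^ (p - 1) := by
          have h1 : A ≤ |A| * |t| ^ (p - 1) :=
            (le_abs_self A).trans (le_mul_of_one_le_right (abs_nonneg A) hpow1)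
          have h2 : B * |t| ^ (p - 1) ≤ |B| * |t| ^ (p - 1) :=
            mul_le_mul_of_nonneg_right (le_abs_self B) hpow0
          linarith
      _ = C * |t| ^ (p - 1) := by ring
  -- bound on the quotient in the hypothesis
  have hq1 : ∀ t : ℝ, 1 ≤ |t| → |f t / (|t| ^ (p - 2) * t)| ≤ C := by
    intro t ht
    have ht0 : t ≠ 0 := by intro h0; rw [h0] at ht; simp at ht; linarith
    have habs0 : (0:ℝ) < |t| := abs_pos.mpr ht0
    have hden : |(|t| ^ (p - 2) * t)| = |t| ^ (p - 1) := by
      rw [abs_mul, abs_of_nonneg (Real.rpow_nonneg (abs_nonneg t) _),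
        show p - 1 = (p - 2) + 1 by ring, Real.rpow_add_one habs0.ne']
    have hpow1 : 1 ≤ |t| ^ (p - 1) := Real.one_le_rpow ht hp1
    rw [abs_div, hden, div_le_iff₀ (by linarith)]
    calc |f t| ≤ C * |t| ^ (p - 1) := hgrow' t ht
      _ = C * |t| ^ (p - 1) := rfl
  -- bound on the integral quotient
  have hq2 : ∀ t : ℝ, 1 ≤ |t| → |(∫ τ in (0:ℝ)..t, f τ) / |t| ^ p| ≤ C := by
    intro t ht
    have ht0 : t ≠ 0 := by intro h0; rw [h0] at ht; simp at ht; linarith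
    have habs0 : (0:ℝ) < |t| := abs_pos.mpr ht0
    have hpow1 : 1 ≤ |t| ^ (p - 1) := Real.one_le_rpow ht hp1
    have hCnn : 0 ≤ C := by positivity
    have hbound : ∀ τ ∈ Set.uIoc (0:ℝ) t, ‖f τ‖ ≤ C * |t| ^ (p - 1) := by
      intro τ hτ
      have hmem : τ ∈ Set.uIcc (0:ℝ) t := Set.Ioc_subset_Icc_self hτ
      rw [Set.uIcc_eq_union] at hmem
      have hτt : |τ| ≤ |t| := by
        rcases hmem with h1 | h1
        · rw [abs_of_nonneg h1.1]
          exact le_trans h1.2 (le_abs_self t)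
        · rw [abs_of_nonpos h1.2]
          exact le_trans (neg_le_neg h1.1) (neg_le_abs t)
      calc ‖f τ‖ = |f τ| := rfl
        _ ≤ A + B * |τ| ^ (p - 1) := hgrow τ
        _ ≤ |A| * |t| ^ (p - 1) + |B| * |t| ^ (p - 1) := by
            have hττ : |τ| ^ (p - 1) ≤ |t| ^ (p - 1) :=
              Real.rpow_le_rpow (abs_nonneg τ) hτt hp1
            have h1 : A ≤ |A| * |t| ^ (p - 1) :=
              (le_abs_self A).trans (le_mul_of_one_le_right (abs_nonneg A) hpow1)
            have h2 : B * |τ| ^ (p - 1) ≤ |B| * |t| ^ (p - 1) := by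
              calc B * |τ| ^ (p - 1) ≤ |B * |τ| ^ (p - 1)| := le_abs_self _
                _ = |B| * |τ| ^ (p - 1) := by
                    rw [abs_mul, abs_of_nonneg (Real.rpow_nonneg (abs_nonneg τ) _)]
                _ ≤ |B| * |t| ^ (p - 1) := mul_le_mul_of_nonneg_left hττ (abs_nonneg B)
            linarith
        _ = C * |t| ^ (p - 1) := by ring
    have hint : |∫ τ in (0:ℝ)..t, f τ| ≤ C * |t| ^ (p - 1) * |t - 0| :=
      intervalIntegral.norm_integral_le_of_norm_le_const hbound
    rw [sub_zero] at hint
    have hps : 0 < |t| ^ p := Real.rpow_pos_of_pos habs0 _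
    rw [abs_div, abs_of_nonneg (le_of_lt hps), div_le_iff₀ hps]
    calc |∫ τ in (0:ℝ)..t, f τ| ≤ C * |t| ^ (p - 1) * |t| := hint
      _ = C * (|t| ^ (p - 1) * |t|) := by ring
      _ = C * |t| ^ p := by
          rw [← Real.rpow_add_one habs0.ne' (p-1)]
          norm_num
  -- coboundedness of the conclusion
  have hcob : IsCoboundedUnder (· ≤ ·) (atBot ⊔ atTop)
      (fun t : ℝ => (∫ τ in (0:ℝ)..t, f τ) / |t| ^ p) := by
    apply isCoboundedUnder_le_of_eventually_le (atBot ⊔ atTop) (x := -C)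
    filter_upwards [hev1] with t ht
    linarith [(abs_le.mp (hq2 t ht)).1]
  -- boundedness of the hypothesis quotient
  have hbdd : IsBoundedUnder (· ≤ ·) (atBot ⊔ atTop)
      (fun t : ℝ => f t / (|t| ^ (p - 2) * t)) := by
    refine ⟨C, ?_⟩
    rw [eventually_map]
    filter_upwards [hev1] with t ht
    exact (abs_le.mp (hq1 t ht)).2
  -- main ε-argument
  apply le_of_forall_pos_le_add
  intro ε hε
  set δ : ℝ := ε * p / 2 with hδ
  have hδ0 : 0 < δ := by positivity
  have hlt : limsup (fun t : ℝ => f t / (|t| ^ (p - 2) * t)) (atBot ⊔ atTop) < α + δ :=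
    lt_of_le_of_lt h (by linarith)
  have hevlt := eventually_lt_of_limsup_lt hlt hbdd
  rw [eventually_sup] at hevlt
  obtain ⟨hevBot, hevTop⟩ := hevlt
  have hαδ : (α + δ) / p + ε / 2 = α / p + ε := by
    field_simp
    ring
  -- atTop part
  have hTop : ∀ᶠ t : ℝ in atTop, (∫ τ in (0:ℝ)..t, f τ) / |t| ^ p ≤ α / p + ε := by
    have := keyTop p hp f hf (α + δ) (ε/2) (by positivity)
      (hevTop.mono fun t ht => ht.le)
    rw [hαδ] at this
    exact this
  -- atBot part via reflection
  have hBot : ∀ᶠ t : ℝ in atBot, (∫ τ in (0:ℝ)..t, f τ) / |t| ^ p ≤ α / p + ε := by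
    set f' : ℝ → ℝ := fun t => -f (-t) with hf'
    have hf'c : Continuous f' := (hf.comp continuous_neg).neg
    have hhyp : ∀ᶠ t : ℝ in atTop, f' t / (|t| ^ (p - 2) * t) ≤ α + δ := by
      filter_upwards [tendsto_neg_atTop_atBot.eventually hevBot] with t ht
      have : f' t / (|t| ^ (p - 2) * t) = f (-t) / (|(-t)| ^ (p - 2) * (-t)) := by
        rw [abs_neg, hf']
        rw [mul_neg, div_neg, neg_div]
      rw [this]
      exact ht.le
    have hconc := keyTop p hp f' hf'c (α + δ) (ε/2) (by positivity) hhyp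
    rw [hαδ] at hconc
    have hint : ∀ t : ℝ, (∫ τ in (0:ℝ)..t, f' τ) = ∫ τ in (0:ℝ)..(-t), f τ := by
      intro t
      rw [hf']
      rw [intervalIntegral.integral_neg, intervalIntegral.integral_comp_neg f, neg_zero,
        intervalIntegral.integral_symm, neg_neg]
    filter_upwards [tendsto_neg_atBot_atTop.eventually hconc] with t ht
    rw [hint, neg_neg, abs_neg] at ht
    exact ht
  exact limsup_le_of_le hcob (eventually_sup.mpr ⟨hBot, hTop⟩)

theorem stmt_9 (N : ℕ) (Ω : Set (Fin N → ℝ)) (hΩbd : Bornology.IsBounded Ω)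
    (hΩmeas : MeasurableSet Ω)
    (p b : ℝ) (hp : 1 < p)
    (g : (Fin N → ℝ) → ℝ → ℝ) (a ᾱ : (Fin N → ℝ) → ℝ)
    (hmeasα : Measurable ᾱ)
    (hmeas : ∀ t : ℝ, Measurable fun x => g x t)
    (hcont : ∀ x ∈ Ω, Continuous (g x))
    (hgrowth : ∀ x ∈ Ω, ∀ t : ℝ, |g x t| ≤ a x + b * |t| ^ (p - 1))
    (hlim : ∀ᵐ x ∂(volume.restrict Ω),
      limsup (fun t : ℝ => g x t / (|t| ^ (p - 2) * t)) (atBot ⊔ atTop) ≤ ᾱ x) :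
    ∀ᵐ x ∂(volume.restrict Ω),
      limsup (fun t : ℝ => (∫ τ in (0 : ℝ)..t, g x τ) / |t| ^ p) (atBot ⊔ atTop) ≤
        ᾱ x / p := by
  filter_upwards [hlim, ae_restrict_mem hΩmeas] with x hx hxΩ
  exact keyMain p hp (g x) (hcont x hxΩ) (a x) b (hgrowth x hxΩ) (ᾱ x) hx
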